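/- Let A = (a_{ij}) be an m×m matrix, p ≤ m, and K_{θ,m,p} = E[V_σ^T (V_σ A V_σ^T) V_σ], where σ is a random injection in S_{p,m} with distribution μ_{θ,m,p}(σ) = p_{θ,m}({σ̃ ∈ S_m : σ̃ restricted to {1,...,p} equals σ}). Then the diagonal entries satisfy (K_{θ,m,p})_{ii} = ((θ+p−1)/(θ+m−1)) a_{ii} for 1 ≤ i ≤ p and (K_{θ,m,p})_{ii} = (p/(θ+m−1)) a_{ii} for p+1 ≤ i ≤ m. -/

import Mathlib

open Matrix

/-- The number of cycles of `σ` (including fixed points as 1-cycles). -/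
def cycleCount {m : ℕ} (σ : Equiv.Perm (Fin m)) : ℕ :=
  (m - σ.support.card) + σ.cycleType.card

/-- The Ewens measure with parameter `θ` on the symmetric group. -/
noncomputable def ewens {m : ℕ} (θ : ℝ) (σ : Equiv.Perm (Fin m)) : ℝ :=
  θ ^ cycleCount σ / ∏ k ∈ Finset.range m, (θ + k)

/-- The measure on injections `{1,…,p} → {1,…,m}`: the Ewens probability of the set of
permutations of `{1,…,m}` whose restriction to `{1,…,p}` equals `σ`. -/
noncomputable def extMeasure {p m : ℕ} (h : p ≤ m) (θ : ℝ) (σ : Fin p ↪ Fin m) : ℝ :=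
  ∑ τ ∈ Finset.univ.filter
      (fun τ : Equiv.Perm (Fin m) => ∀ i : Fin p, τ (Fin.castLE h i) = σ i),
    ewens θ τ

/-- The `p × m` matrix whose `i`-th row is the standard basis row vector `e_{σ i}`. -/
def Vmat {p m : ℕ} (σ : Fin p ↪ Fin m) : Matrix (Fin p) (Fin m) ℂ :=
  Matrix.of fun i j => if j = σ i then 1 else 0

/-! ### Auxiliary lemmas on `cycleCount` -/

lemma cycleCount_conj {m : ℕ} (π τ : Equiv.Perm (Fin m)) :
    cycleCount (π * τ * π⁻¹) = cycleCount τ := by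
  unfold cycleCount
  rw [Equiv.Perm.cycleType_conj, Equiv.Perm.support_conj, Finset.card_map]

lemma coe_finSuccAboveEquiv_zero {n : ℕ} (i : Fin n) :
    ((finSuccAboveEquiv (0 : Fin (n+1)) i : {x : Fin (n+1) // x ≠ 0}) : Fin (n+1)) = i.succ := by
  simp [finSuccAboveEquiv_apply, Fin.zero_succAbove]

lemma decomposeFin_zero_eq {n : ℕ} (e : Equiv.Perm (Fin n)) :
    Equiv.Perm.decomposeFin.symm (0, e) = e.extendDomain (finSuccAboveEquiv 0) := by
  refine Equiv.ext fun x => ?_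
  refine Fin.cases ?_ (fun i => ?_) x
  · rw [Equiv.Perm.decomposeFin_symm_apply_zero,
      Equiv.Perm.extendDomain_apply_not_subtype _ _ (by simp)]
  · rw [Equiv.Perm.decomposeFin_symm_apply_succ, ← coe_finSuccAboveEquiv_zero i,
      Equiv.Perm.extendDomain_apply_image, coe_finSuccAboveEquiv_zero]
    simp

lemma cycleCount_decomposeFin_zero {n : ℕ} (e : Equiv.Perm (Fin n)) :
    cycleCount (Equiv.Perm.decomposeFin.symm (0, e)) = cycleCount e + 1 := by
  rw [decomposeFin_zero_eq]
  unfold cycleCount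
  rw [Equiv.Perm.cycleType_extendDomain, Equiv.Perm.card_support_extend_domain]
  have : e.support.card ≤ n := by
    simpa using Finset.card_le_univ e.support
  omega

lemma decomposeFin_eq_swap_mul {n : ℕ} (p : Fin (n+1)) (e : Equiv.Perm (Fin n)) :
    Equiv.Perm.decomposeFin.symm (p, e) =
      Equiv.swap 0 p * Equiv.Perm.decomposeFin.symm (0, e) := by
  refine Equiv.ext fun x => ?_
  refine Fin.cases ?_ (fun i => ?_) x
  · simp [Equiv.Perm.decomposeFin_symm_apply_zero]
  · simp [Equiv.Perm.decomposeFin_symm_apply_succ]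

lemma cycleCount_decomposeFin_ne {n : ℕ} (p : Fin (n+1)) (hp : p ≠ 0) (e : Equiv.Perm (Fin n)) :
    cycleCount (Equiv.Perm.decomposeFin.symm (p, e)) = cycleCount e := by
  have hσcc : cycleCount (Equiv.Perm.decomposeFin.symm (0, e)) = cycleCount e + 1 :=
    cycleCount_decomposeFin_zero e
  set σ : Equiv.Perm (Fin (n+1)) := Equiv.Perm.decomposeFin.symm (0, e) with hσdef
  set τ : Equiv.Perm (Fin (n+1)) := Equiv.Perm.decomposeFin.symm (p, e) with hτdef
  have hτσ : τ = Equiv.swap 0 p * σ := decomposeFin_eq_swap_mul p e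
  have hσ0 : σ 0 = 0 := Equiv.Perm.decomposeFin_symm_apply_zero 0 e
  have hτ0 : τ 0 = p := Equiv.Perm.decomposeFin_symm_apply_zero p e
  by_cases hfix : σ p = p
  · have hd : Equiv.Perm.Disjoint (Equiv.swap 0 p) σ := by
      intro x
      by_cases h0 : x = 0
      · exact Or.inr (h0 ▸ hσ0)
      by_cases hpp : x = p
      · exact Or.inr (hpp ▸ hfix)
      · exact Or.inl (Equiv.swap_apply_of_ne_of_ne h0 hpp)
    have h1 : τ.support.card = 2 + σ.support.card := by
      rw [hτσ, hd.card_support_mul, Equiv.Perm.card_support_swap hp.symm]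
    have h2 : τ.cycleType.card = 1 + σ.cycleType.card := by
      rw [hτσ, hd.cycleType_mul, Multiset.card_add,
        (Equiv.Perm.isCycle_swap hp.symm).cycleType]
      simp
    have h3 : τ.support.card ≤ n + 1 := by simpa using Finset.card_le_univ τ.support
    unfold cycleCount at *
    omega
  · have hσp0 : σ p ≠ 0 := fun hc => hp (σ.injective (hc.trans hσ0.symm))
    have hτp : τ p = σ p := by
      rw [hτσ]
      simp only [Equiv.Perm.mul_apply]
      exact Equiv.swap_apply_of_ne_of_ne hσp0 hfix
    have h00 : τ 0 ≠ 0 := by rw [hτ0]; exact hp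
    have hττ0 : τ (τ 0) ≠ 0 := by rw [hτ0, hτp]; exact hσp0
    have hστ : σ = Equiv.swap 0 p * τ := by
      rw [hτσ, ← mul_assoc, Equiv.swap_mul_self, one_mul]
    have hsupp : σ.support = τ.support \ {0} := by
      have := Equiv.Perm.support_swap_mul_eq τ 0 hττ0
      rwa [hτ0, ← hστ] at this
    have h0mem : (0 : Fin (n+1)) ∈ τ.support := Equiv.Perm.mem_support.mpr h00
    have h1 : σ.support.card + 1 = τ.support.card := by
      rw [hsupp, Finset.card_sdiff_of_subset (by simpa using h0mem)]
      simp only [Finset.card_singleton]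
      have : 1 ≤ τ.support.card := Finset.card_pos.mpr ⟨0, h0mem⟩
      omega
    set c : Equiv.Perm (Fin (n+1)) := τ.cycleOf 0 with hcdef
    have hccyc : c.IsCycle := Equiv.Perm.isCycle_cycleOf τ h00
    have hcmem : c ∈ τ.cycleFactorsFinset :=
      Equiv.Perm.cycleOf_mem_cycleFactorsFinset_iff.mpr h0mem
    have hd : Equiv.Perm.Disjoint (τ * c⁻¹) c :=
      Equiv.Perm.disjoint_mul_inv_of_mem_cycleFactorsFinset hcmem
    set ρ : Equiv.Perm (Fin (n+1)) := τ * c⁻¹ with hρdef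
    have hτρ : τ = ρ * c := by rw [hρdef, inv_mul_cancel_right]
    have hc0 : c 0 = p := by rw [hcdef, Equiv.Perm.cycleOf_apply_self, hτ0]
    have hsc : τ.SameCycle 0 p := ⟨1, by simpa using hτ0⟩
    have hcp : c p = σ p := by rw [hcdef, hsc.cycleOf_apply, hτp]
    have hcc0 : c (c 0) ≠ 0 := by rw [hc0, hcp]; exact hσp0
    set c' : Equiv.Perm (Fin (n+1)) := Equiv.swap 0 p * c with hc'def
    have hc'cyc : c'.IsCycle := by
      have := hccyc.swap_mul (x := 0) (by rw [hc0]; exact hp) hcc0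
      rwa [hc0, ← hc'def] at this
    have hsuppc' : c'.support = c.support \ {0} := by
      have := Equiv.Perm.support_swap_mul_eq c 0 hcc0
      rwa [hc0, ← hc'def] at this
    have hρc' : Equiv.Perm.Disjoint ρ c' := by
      rw [Equiv.Perm.disjoint_iff_disjoint_support] at hd ⊢
      exact hd.mono_right (by rw [hsuppc']; exact Finset.sdiff_subset)
    have h0c : (0 : Fin (n+1)) ∈ c.support := by
      rw [Equiv.Perm.mem_support, hc0]; exact hp
    have hpc : p ∈ c.support := by
      rw [Equiv.Perm.mem_support, hcp]; exact hfix
    have hρswap : Equiv.Perm.Disjoint ρ (Equiv.swap 0 p) := by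
      rw [Equiv.Perm.disjoint_iff_disjoint_support] at hd ⊢
      refine hd.mono_right ?_
      rw [Equiv.Perm.support_swap hp.symm]
      intro x hx
      simp only [Finset.mem_insert, Finset.mem_singleton] at hx
      rcases hx with rfl | rfl
      · exact h0c
      · exact hpc
    have hσρ : σ = ρ * c' := by
      rw [hστ, hτρ, hc'def, ← mul_assoc, ← hρswap.commute.eq, mul_assoc]
    have h2 : σ.cycleType.card = τ.cycleType.card := by
      rw [hσρ, hτρ, hρc'.cycleType_mul, hd.cycleType_mul, Multiset.card_add, Multiset.card_add,
        hc'cyc.cycleType, hccyc.cycleType]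
      simp
    have h3 : τ.support.card ≤ n + 1 := by simpa using Finset.card_le_univ τ.support
    unfold cycleCount at *
    omega

lemma theta_pow_decomposeFin {n : ℕ} (θ : ℝ) (p : Fin (n+1)) (e : Equiv.Perm (Fin n)) :
    θ ^ cycleCount (Equiv.Perm.decomposeFin.symm (p, e))
      = (if p = 0 then θ else 1) * θ ^ cycleCount e := by
  by_cases hp : p = 0
  · subst hp; rw [cycleCount_decomposeFin_zero, if_pos rfl, pow_succ, mul_comm]
  · rw [cycleCount_decomposeFin_ne p hp, if_neg hp, one_mul]

lemma sum_theta_pow (θ : ℝ) : ∀ m : ℕ,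
    ∑ τ : Equiv.Perm (Fin m), θ ^ cycleCount τ = ∏ k ∈ Finset.range m, (θ + k)
  | 0 => by
    rw [Finset.range_zero, Finset.prod_empty]
    have h1 : (Finset.univ : Finset (Equiv.Perm (Fin 0))) = {1} :=
      Finset.eq_singleton_iff_unique_mem.mpr
        ⟨Finset.mem_univ 1, fun τ _ => Equiv.ext fun x => x.elim0⟩
    rw [h1, Finset.sum_singleton]
    norm_num [cycleCount]
  | (n+1) => by
    rw [← Equiv.sum_comp (Equiv.Perm.decomposeFin.symm)
      (fun τ : Equiv.Perm (Fin (n+1)) => θ ^ cycleCount τ), Fintype.sum_prod_type]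
    simp only [theta_pow_decomposeFin, ← Finset.mul_sum]
    rw [sum_theta_pow θ n, Finset.prod_range_succ, ← Finset.sum_mul]
    have hsum : (∑ p : Fin (n+1), if p = 0 then θ else (1:ℝ)) = θ + n := by
      have hpt : ∀ p : Fin (n+1),
          (if p = 0 then θ else (1:ℝ)) = (if p = 0 then θ - 1 else 0) + 1 := by
        intro p; by_cases hc : p = 0 <;> simp [hc]
      simp only [hpt]
      rw [Finset.sum_add_distrib, Finset.sum_ite_eq' Finset.univ (0 : Fin (n+1)) (fun _ => θ - 1)]
      simp [Finset.card_univ]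
    rw [hsum]
    ring

lemma sum_fix_zero (θ : ℝ) {n : ℕ} (i : Fin (n+1)) :
    ∑ τ ∈ Finset.univ.filter (fun τ : Equiv.Perm (Fin (n+1)) => τ 0 = i), θ ^ cycleCount τ
      = (if i = 0 then θ else 1) * ∏ k ∈ Finset.range n, (θ + k) := by
  rw [Finset.sum_filter]
  rw [← Equiv.sum_comp (Equiv.Perm.decomposeFin.symm)
    (fun τ : Equiv.Perm (Fin (n+1)) => if τ 0 = i then θ ^ cycleCount τ else 0),
    Fintype.sum_prod_type]
  simp only [Equiv.Perm.decomposeFin_symm_apply_zero]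
  simp only [Finset.sum_ite_irrel, Finset.sum_const_zero]
  rw [Finset.sum_ite_eq' Finset.univ i
    (fun p => ∑ e : Equiv.Perm (Fin n), θ ^ cycleCount (Equiv.Perm.decomposeFin.symm (p, e)))]
  simp only [Finset.mem_univ, if_true]
  simp only [theta_pow_decomposeFin, ← Finset.mul_sum]
  rw [sum_theta_pow θ n]

lemma sum_fix (θ : ℝ) {n : ℕ} (j i : Fin (n+1)) :
    ∑ τ ∈ Finset.univ.filter (fun τ : Equiv.Perm (Fin (n+1)) => τ j = i), θ ^ cycleCount τ
      = (if i = j then θ else 1) * ∏ k ∈ Finset.range n, (θ + k) := by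
  have key := sum_fix_zero θ (Equiv.swap 0 j i)
  set π : Equiv.Perm (Fin (n+1)) := Equiv.swap 0 j with hπ
  have hππ : π⁻¹ = π := by rw [hπ, Equiv.swap_inv]
  rw [Finset.sum_filter] at key ⊢
  rw [← Equiv.sum_comp ((Equiv.mulLeft π).trans (Equiv.mulRight π))
    (fun τ : Equiv.Perm (Fin (n+1)) => if τ 0 = π i then θ ^ cycleCount τ else 0)] at key
  have hpt : ∀ τ : Equiv.Perm (Fin (n+1)),
      (if ((Equiv.mulLeft π).trans (Equiv.mulRight π) τ) 0 = π i
        then θ ^ cycleCount (((Equiv.mulLeft π).trans (Equiv.mulRight π)) τ) else 0)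
      = if τ j = i then θ ^ cycleCount τ else 0 := by
    intro τ
    have happ : ((Equiv.mulLeft π).trans (Equiv.mulRight π)) τ = π * τ * π := rfl
    have hcc : cycleCount (π * τ * π) = cycleCount τ := by
      conv_lhs => rw [← hππ]
      exact cycleCount_conj π τ
    have hcond : ((π * τ * π) 0 = π i) ↔ (τ j = i) := by
      have h0 : π 0 = j := Equiv.swap_apply_left 0 j
      simp only [Equiv.Perm.mul_apply, h0]
      exact π.apply_eq_iff_eq
    rw [happ, hcc]
    exact if_congr hcond rfl rfl
  simp only [hpt] at key
  rw [key]
  congr 1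
  have : (Equiv.swap 0 j i = 0) ↔ (i = j) := by
    rw [Equiv.apply_eq_iff_eq_symm_apply, Equiv.symm_swap, Equiv.swap_apply_left]
  rw [if_congr this rfl rfl]

lemma prod_theta_pos {θ : ℝ} (hθ : 0 < θ) (n : ℕ) : 0 < ∏ k ∈ Finset.range n, (θ + k) :=
  Finset.prod_pos fun k _ => by positivity

lemma sum_ewens_fix (θ : ℝ) (hθ : 0 < θ) {n : ℕ} (j i : Fin (n+1)) :
    ∑ τ ∈ Finset.univ.filter (fun τ : Equiv.Perm (Fin (n+1)) => τ j = i), ewens θ τ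
      = (if i = j then θ else 1) / (θ + n) := by
  unfold ewens
  rw [← Finset.sum_div, sum_fix, Finset.prod_range_succ,
    mul_comm (∏ k ∈ Finset.range n, (θ + k)) (θ + n),
    mul_div_mul_right _ _ (ne_of_gt (prod_theta_pos hθ n))]

lemma diag_B {p m : ℕ} (σ : Fin p ↪ Fin m) (A : Matrix (Fin m) (Fin m) ℂ) (i : Fin m) :
    ((Vmat σ)ᵀ * (Vmat σ * A * (Vmat σ)ᵀ) * Vmat σ) i i
      = if ∃ k, σ k = i then A i i else 0 := by
  have hsub : Vmat σ * A * (Vmat σ)ᵀ = A.submatrix σ σ := by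
    ext k l
    simp [Matrix.mul_apply, Vmat, Matrix.submatrix_apply, ite_mul, mul_ite]
  rw [hsub, Matrix.mul_apply]
  by_cases h : ∃ k, σ k = i
  · obtain ⟨k0, hk0⟩ := h
    rw [if_pos ⟨k0, hk0⟩]
    rw [Finset.sum_eq_single k0]
    · rw [Matrix.mul_apply, Finset.sum_eq_single k0]
      · simp [Vmat, Matrix.transpose_apply, hk0, Matrix.submatrix_apply]
      · intro b _ hb
        have hbi : ¬ (i = σ b) := fun hc => hb (σ.injective ((hc ▸ hk0 : σ k0 = σ b))).symm
        simp [Vmat, Matrix.transpose_apply, hbi]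
      · simp
    · intro b _ hb
      have hbi : ¬ (i = σ b) := fun hc => hb (σ.injective ((hc ▸ hk0 : σ k0 = σ b))).symm
      simp [Vmat, hbi]
    · simp
  · rw [if_neg h]
    apply Finset.sum_eq_zero
    intro l _
    have : ¬ (i = σ l) := fun hc => h ⟨l, hc.symm⟩
    simp [Vmat, this]

theorem stmt_12 {p m : ℕ} (h : p ≤ m) (θ : ℝ) (hθ : 0 < θ)
    (A : Matrix (Fin m) (Fin m) ℂ) (i : Fin m) :
    (∑ σ : Fin p ↪ Fin m,
        extMeasure h θ σ • ((Vmat σ)ᵀ * (Vmat σ * A * (Vmat σ)ᵀ) * Vmat σ)) i i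
      = if (i : ℕ) < p then (((θ + p - 1) / (θ + m - 1) : ℝ) : ℂ) * A i i
        else ((p / (θ + m - 1) : ℝ) : ℂ) * A i i := by
  have hm : 0 < m := i.pos
  obtain ⟨n, rfl⟩ : ∃ n, m = n + 1 := ⟨m - 1, by omega⟩
  rw [Matrix.sum_apply]
  have hterm : ∀ σ : Fin p ↪ Fin (n+1),
      (extMeasure h θ σ • ((Vmat σ)ᵀ * (Vmat σ * A * (Vmat σ)ᵀ) * Vmat σ)) i i
        = (((if ∃ k, σ k = i then extMeasure h θ σ else 0 : ℝ)) : ℂ) * A i i := by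
    intro σ
    rw [Matrix.smul_apply, diag_B]
    by_cases hc : ∃ k, σ k = i
    · rw [if_pos hc, if_pos hc, Complex.real_smul]
    · rw [if_neg hc, if_neg hc]; simp
  simp only [hterm]
  rw [← Finset.sum_mul, ← Complex.ofReal_sum]
  -- the key real computation
  have hreal : ∑ σ : Fin p ↪ Fin (n+1), (if ∃ k, σ k = i then extMeasure h θ σ else 0)
      = if (i : ℕ) < p then (θ + p - 1) / (θ + (n+1 : ℕ) - 1)
        else p / (θ + (n+1 : ℕ) - 1) := by
    unfold extMeasure
    have step1 : ∀ σ : Fin p ↪ Fin (n+1),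
        (if ∃ k, σ k = i then
          (∑ τ ∈ Finset.univ.filter
            (fun τ : Equiv.Perm (Fin (n+1)) => ∀ i' : Fin p, τ (Fin.castLE h i') = σ i'),
            ewens θ τ) else 0)
        = ∑ τ : Equiv.Perm (Fin (n+1)),
            if (∀ i' : Fin p, τ (Fin.castLE h i') = σ i') then
              (if ∃ k, σ k = i then ewens θ τ else 0) else 0 := by
      intro σ
      conv_rhs => rw [← Finset.sum_filter]
      rw [Finset.sum_ite_irrel, Finset.sum_const_zero]
    simp only [step1]
    rw [Finset.sum_comm]
    have step2 : ∀ τ : Equiv.Perm (Fin (n+1)),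
        (∑ σ : Fin p ↪ Fin (n+1),
          if (∀ i' : Fin p, τ (Fin.castLE h i') = σ i') then
            (if ∃ k, σ k = i then ewens θ τ else 0) else 0)
        = if (∃ k : Fin p, τ (Fin.castLE h k) = i) then ewens θ τ else 0 := by
      intro τ
      set στ : Fin p ↪ Fin (n+1) := (Fin.castLEEmb h).trans τ.toEmbedding with hστ
      have hval : ∀ k : Fin p, στ k = τ (Fin.castLE h k) := fun k => rfl
      rw [Finset.sum_eq_single στ]
      · rw [if_pos (fun i' => (hval i').symm)]
        exact if_congr Iff.rfl rfl rfl
      · intro b _ hb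
        rw [if_neg]
        intro hcond
        exact hb (DFunLike.ext b στ fun k => (hcond k).symm)
      · intro hmem; exact absurd (Finset.mem_univ στ) hmem
    simp only [step2]
    rw [← Finset.sum_filter]
    have hpart : (Finset.univ.filter
        (fun τ : Equiv.Perm (Fin (n+1)) => ∃ k : Fin p, τ (Fin.castLE h k) = i))
        = Finset.univ.biUnion (fun k : Fin p =>
            Finset.univ.filter (fun τ : Equiv.Perm (Fin (n+1)) => τ (Fin.castLE h k) = i)) := by
      ext τ
      simp
    rw [hpart, Finset.sum_biUnion]
    · have := fun k : Fin p => sum_ewens_fix θ hθ (Fin.castLE h k) i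
      simp only [this]
      rw [← Finset.sum_div]
      by_cases hi : (i : ℕ) < p
      · rw [if_pos hi]
        set k0 : Fin p := ⟨(i : ℕ), hi⟩ with hk0
        have hcast : Fin.castLE h k0 = i := by
          apply Fin.ext
          simp [hk0]
        have hcong : ∀ k : Fin p,
            (if i = Fin.castLE h k then θ else (1:ℝ)) = (if k = k0 then θ - 1 else 0) + 1 := by
          intro k
          by_cases hk : k = k0
          · subst hk; rw [if_pos hcast.symm, if_pos rfl]; ring
          · rw [if_neg, if_neg hk]
            · ring
            · intro hik
              apply hk
              apply Fin.ext
              have : (i : ℕ) = ((Fin.castLE h k : Fin (n+1)) : ℕ) := congrArg Fin.val hik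
              simpa [hk0] using this.symm
        simp only [hcong]
        rw [Finset.sum_add_distrib,
          Finset.sum_ite_eq' Finset.univ k0 (fun _ => θ - 1)]
        simp only [Finset.mem_univ, if_true, Finset.sum_const, Finset.card_univ,
          Fintype.card_fin, nsmul_eq_mul, mul_one]
        congr 1 <;> push_cast <;> ring
      · rw [if_neg hi]
        have hcong : ∀ k : Fin p, (if i = Fin.castLE h k then θ else (1:ℝ)) = 1 := by
          intro k
          rw [if_neg]
          intro hik
          apply hi
          have : (i : ℕ) = ((Fin.castLE h k : Fin (n+1)) : ℕ) := congrArg Fin.val hik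
          rw [this]
          simp only [Fin.coe_castLE]; exact k.isLt
        simp only [hcong]
        simp only [Finset.sum_const, Finset.card_univ, Fintype.card_fin, nsmul_eq_mul, mul_one]
        congr 1
        push_cast
        ring
    · intro a _ b _ hab
      refine Finset.disjoint_left.mpr ?_
      intro τ hτa hτb
      simp only [Finset.mem_filter, Finset.mem_univ, true_and] at hτa hτb
      exact hab (Fin.castLE_injective h (τ.injective (hτa.trans hτb.symm)))
  rw [hreal]
  by_cases hi : (i : ℕ) < p
  · rw [if_pos hi, if_pos hi]
  · rw [if_neg hi, if_neg hi]
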